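/- Under the MAR setup, let L(g, e) := E[b·(b z* − g(x))²/e(x)]. Then for every g ∈ G and every measurable e : X → [ε₀, 1], the deterministic error decomposition (1/2)·‖g − g*‖₂² ≤ (8/ε₀²)·‖e − e*‖₂² + L(g, e) − L(g*, e) holds. -/

import Mathlib

open MeasureTheory

noncomputable section

/-- A sample in the Missing At Random setting: context `x`, true covariate `z*`,
and missingness indicator `b`. -/
abbrev MSamp (X : Type*) : Type _ := X × ℝ × Bool

namespace MSamp

variable {X : Type*}

/-- the context -/
def x (s : MSamp X) : X := s.1

/-- the true covariate `z*` -/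
def z (s : MSamp X) : ℝ := s.2.1

/-- the missingness indicator -/
def b (s : MSamp X) : Bool := s.2.2

/-- the missingness indicator, as a real number in `{0, 1}` -/
def bR (s : MSamp X) : ℝ := if s.2.2 then 1 else 0

end MSamp

/-- The Missing At Random (MAR) data-generating setup: `(x, z*, b) ~ P`,
`P(b = 1 ∣ x, z*) = e*(x)` (so `b ⟂ z*` given `x`), and `z* = g*(x) + η` with
`E[η ∣ x] = 0` and `|η| ≤ τ` a.s. -/
structure MARSetup (X : Type*) [MeasurableSpace X] where
  /-- the law of one sample `(x, z*, b)` -/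
  P : Measure (MSamp X)
  probP : IsProbabilityMeasure P
  /-- the missingness mechanism `e*(x) = P(b = 1 ∣ x)` -/
  estar : X → ℝ
  estarMeas : Measurable estar
  estarRange : ∀ x, estar x ∈ Set.Icc (0 : ℝ) 1
  /-- Missing At Random: `P(b = 1 ∣ x, z*) = e*(x)` -/
  mar : P[fun s : MSamp X => MSamp.bR s |
      MeasurableSpace.comap (fun s : MSamp X => (MSamp.x s, MSamp.z s)) inferInstance]
        =ᵐ[P] fun s => estar (MSamp.x s)
  /-- the true covariate regression function -/
  gstar : X → ℝ
  gstarMeas : Measurable gstar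
  gstarRange : ∀ x, gstar x ∈ Set.Icc (-1 : ℝ) 1
  /-- the noise bound -/
  tau : ℝ
  /-- the covariate noise `η = z* − g*(x)` is bounded by `τ` -/
  eta_bdd : ∀ᵐ s ∂P, |MSamp.z s - gstar (MSamp.x s)| ≤ tau
  /-- `E[η ∣ x] = 0` -/
  eta_mean : P[fun s : MSamp X => MSamp.z s - gstar (MSamp.x s) |
      MeasurableSpace.comap (MSamp.x (X := X)) inferInstance] =ᵐ[P] 0

namespace MARSetup

variable {X : Type*} [MeasurableSpace X]

/-- the `L₂(P)` distance between two functions of the context -/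
def L2x (S : MARSetup X) (g h : X → ℝ) : ℝ :=
  Real.sqrt (∫ s, (g (MSamp.x s) - h (MSamp.x s)) ^ 2 ∂S.P)

/-- the inverse-propensity weighted squared loss `L(g, e) = E[b (b z* − g(x))² / e(x)]` -/
def wloss (S : MARSetup X) (g e : X → ℝ) : ℝ :=
  ∫ s, MSamp.bR s * (MSamp.bR s * MSamp.z s - g (MSamp.x s)) ^ 2 / e (MSamp.x s) ∂S.P

end MARSetup

section helperlemmas
open MeasureTheory

lemma integrable_of_ae_bound {Ω : Type*} [MeasurableSpace Ω] {μ : Measure Ω} [IsFiniteMeasure μ]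
    {f : Ω → ℝ} (hf : AEStronglyMeasurable f μ) {C : ℝ} (h : ∀ᵐ s ∂μ, |f s| ≤ C) :
    Integrable f μ :=
  Integrable.mono' (integrable_const C) hf (by simpa [Real.norm_eq_abs] using h)

lemma pullout {Ω : Type*} {m0 : MeasurableSpace Ω} {μ : Measure Ω} [IsProbabilityMeasure μ]
    {m : MeasurableSpace Ω} (hm : m ≤ m0) {φ f h : Ω → ℝ}
    (hφ : StronglyMeasurable[m] φ) (hcond : μ[f|m] =ᵐ[μ] h)
    (hf : Integrable f μ) (hφf : Integrable (φ * f) μ) :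
    ∫ s, φ s * f s ∂μ = ∫ s, φ s * h s ∂μ := by
  have h1 : ∫ s, (φ * f) s ∂μ = ∫ s, (μ[φ * f|m]) s ∂μ := (integral_condExp hm).symm
  have h2 : μ[φ * f|m] =ᵐ[μ] φ * μ[f|m] := condExp_mul_of_stronglyMeasurable_left hφ hφf hf
  have h3 : (φ * μ[f|m] : Ω → ℝ) =ᵐ[μ] fun s => φ s * h s := hcond.mono fun s hs => by
    simp [hs]
  calc ∫ s, φ s * f s ∂μ = ∫ s, (μ[φ * f|m]) s ∂μ := h1
    _ = ∫ s, φ s * h s ∂μ := integral_congr_ae (h2.trans h3)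


lemma ptineq (eps0 dd ee es : ℝ) (heps0 : 0 < eps0) (h1 : eps0 ≤ ee) (h2 : ee ≤ 1)
    (h4 : eps0 ≤ es) (h3 : |dd| ≤ 2) :
    (1 / 2) * dd ^ 2 ≤ 8 / eps0 ^ 2 * (ee - es) ^ 2 + dd ^ 2 / ee * es := by
  have hepos : (0:ℝ) < ee := lt_of_lt_of_le heps0 h1
  set c := ee - es with hc
  have hr : dd ^ 2 / ee * es = dd ^ 2 - dd ^ 2 * c / ee := by
    field_simp [hc]; ring
  rw [hr]
  have habs : |dd ^ 2 * c / ee| ≤ 2 * |dd| * |c| / eps0 := by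
    rw [abs_div, abs_of_pos hepos, abs_mul, abs_pow]
    refine div_le_div₀ (by positivity) ?_ heps0 h1
    nlinarith [mul_nonneg (mul_nonneg (sub_nonneg.mpr h3) (abs_nonneg dd)) (abs_nonneg c),
      abs_nonneg dd, abs_nonneg c]
  have hlow : -(2 * |dd| * |c| / eps0) ≤ -(dd ^ 2 * c / ee) := by
    have := (le_abs_self (dd ^ 2 * c / ee)).trans habs; linarith
  set u := 8 / eps0 ^ 2 with hu'
  set v := 2 * |dd| * |c| / eps0 with hv'
  have he2 : (0:ℝ) < eps0 ^ 2 := by positivity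
  have hu : u * eps0 ^ 2 = 8 := by rw [hu']; field_simp
  have huc : u * eps0 ^ 2 * c ^ 2 = 8 * c ^ 2 := by rw [hu]
  have hv2 : v * eps0 ^ 2 = 2 * |dd| * |c| * eps0 := by
    rw [hv']; field_simp
  have hA1 : 0 ≤ eps0 ^ 2 * dd ^ 2 + 16 * c ^ 2 - 8 * eps0 * |dd| * |c| := by
    nlinarith [sq_nonneg (eps0 * |dd| - 4 * |c|), sq_abs dd, sq_abs c]
  have final : 0 ≤ (u * c ^ 2 + dd ^ 2 / 2 - v) * (4 * eps0 ^ 2) := by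
    nlinarith [huc, hv2, hA1]
  have key : 0 ≤ u * c ^ 2 + dd ^ 2 / 2 - v :=
    (mul_nonneg_iff_of_pos_right (show (0:ℝ) < 4 * eps0 ^ 2 by positivity)).mp final
  linarith

end helperlemmas

/-- Deterministic error decomposition: in the MAR setup with
`e*(x) ≥ ε₀ > 0`, for every `g` in a class `G` of measurable `[−1,1]`-valued functions
containing `g*`, and every measurable `e : X → [ε₀, 1]`,
`(1/2)·‖g − g*‖₂² ≤ (8/ε₀²)·‖e − e*‖₂² + L(g, e) − L(g*, e)`. -/
theorem stmt13 {X : Type*} [MeasurableSpace X] (S : MARSetup X)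
    (eps0 : ℝ) (heps0 : 0 < eps0) (hestarLB : ∀ x, eps0 ≤ S.estar x)
    (G : Set (X → ℝ)) (hGmeas : ∀ g ∈ G, Measurable g)
    (hGrange : ∀ g ∈ G, ∀ x, g x ∈ Set.Icc (-1 : ℝ) 1) (hgstarG : S.gstar ∈ G)
    (g : X → ℝ) (hg : g ∈ G)
    (e : X → ℝ) (heMeas : Measurable e) (heRange : ∀ x, e x ∈ Set.Icc eps0 1) :
    (1 / 2) * (S.L2x g S.gstar) ^ 2 ≤
      (8 / eps0 ^ 2) * (S.L2x e S.estar) ^ 2 + (S.wloss g e - S.wloss S.gstar e) := by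
  
  haveI := S.probP
  set μ := S.P with hmu
  have hgM : Measurable g := hGmeas g hg
  have hgR : ∀ y, g y ∈ Set.Icc (-1:ℝ) 1 := hGrange g hg
  have heLB : ∀ y, eps0 ≤ e y := fun y => (heRange y).1
  have hePos : ∀ y, (0:ℝ) < e y := fun y => lt_of_lt_of_le heps0 (heLB y)
  have heNe : ∀ y, e y ≠ 0 := fun y => ne_of_gt (hePos y)
  have hx : Measurable (MSamp.x (X := X)) := measurable_fst
  have hz : Measurable (MSamp.z (X := X)) := measurable_fst.comp measurable_snd
  have hbool : Measurable (fun s : MSamp X => s.2.2) := measurable_snd.comp measurable_snd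
  have hbR : Measurable (MSamp.bR (X := X)) := by
    have : Measurable (fun b : Bool => if b then (1:ℝ) else 0) := measurable_of_countable _
    exact this.comp hbool
  have hbR01 : ∀ s : MSamp X, MSamp.bR s = 0 ∨ MSamp.bR s = 1 := by
    intro s; unfold MSamp.bR; by_cases h : s.2.2 <;> simp [h]
  -- the noise
  set η : MSamp X → ℝ := fun s => MSamp.z s - S.gstar (MSamp.x s) with hη
  have hηM : Measurable η := hz.sub (S.gstarMeas.comp hx)
  -- key bounded quantities
  have hd2 : ∀ y, |g y - S.gstar y| ≤ 2 := by
    intro y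
    have h1 := hgR y; have h2 := S.gstarRange y
    rw [abs_le]; constructor <;> [nlinarith [h1.1, h2.2]; nlinarith [h1.2, h2.1]]
  have hdiv : ∀ (a : ℝ) (y : X) (C : ℝ), 0 ≤ C → |a| ≤ C → |a / e y| ≤ C / eps0 := by
    intro a y C hC ha
    rw [abs_div, abs_of_pos (hePos y)]
    exact div_le_div₀ hC ha heps0 (heLB y)
  -- the two main pieces
  set T1 : MSamp X → ℝ :=
    fun s => (g (MSamp.x s) - S.gstar (MSamp.x s)) ^ 2 / e (MSamp.x s) * MSamp.bR s with hT1
  set T2 : MSamp X → ℝ :=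
    fun s => η s * (S.gstar (MSamp.x s) - g (MSamp.x s)) / e (MSamp.x s) * MSamp.bR s with hT2
  set Fg : MSamp X → ℝ :=
    fun s => MSamp.bR s * (MSamp.bR s * MSamp.z s - g (MSamp.x s)) ^ 2 / e (MSamp.x s) with hFg
  set Fgs : MSamp X → ℝ :=
    fun s => MSamp.bR s * (MSamp.bR s * MSamp.z s - S.gstar (MSamp.x s)) ^ 2 / e (MSamp.x s)
    with hFgs
  -- integrability
  have hτ : ∀ᵐ s ∂μ, |η s| ≤ S.tau := S.eta_bdd
  have hFgI : Integrable Fg μ := by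
    refine integrable_of_ae_bound ((hbR.mul (((hbR.mul hz).sub (hgM.comp hx)).pow_const 2)
      |>.div (heMeas.comp hx)).aestronglyMeasurable) (C := (|S.tau| + 2) ^ 2 / eps0) ?_
    filter_upwards [hτ] with s hs
    rcases hbR01 s with h | h
    · simp only [hFg, h, zero_mul, zero_div, abs_zero]
      positivity
    · simp only [hFg, h, one_mul]
      have : |MSamp.z s - g (MSamp.x s)| ≤ |S.tau| + 2 := by
        have h1 := (hgR (MSamp.x s)).1
        have h2 := (hgR (MSamp.x s)).2
        have h4 := (S.gstarRange (MSamp.x s)).1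
        have h5 := (S.gstarRange (MSamp.x s)).2
        have h3 := abs_le.mp (hs.trans (le_abs_self S.tau))
        simp only [hη] at h3
        rw [abs_le]
        exact ⟨by linarith [h3.1], by linarith [h3.2]⟩
      refine hdiv _ _ ((|S.tau| + 2) ^ 2) (by positivity) ?_
      rw [abs_pow, sq_abs] ; nlinarith [abs_nonneg (MSamp.z s - g (MSamp.x s)), sq_abs (MSamp.z s - g (MSamp.x s))]
  have hFgsI : Integrable Fgs μ := by
    refine integrable_of_ae_bound ((hbR.mul (((hbR.mul hz).sub (S.gstarMeas.comp hx)).pow_const 2)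
      |>.div (heMeas.comp hx)).aestronglyMeasurable) (C := (|S.tau| + 2) ^ 2 / eps0) ?_
    filter_upwards [hτ] with s hs
    rcases hbR01 s with h | h
    · simp only [hFgs, h, zero_mul, zero_div, abs_zero]
      positivity
    · simp only [hFgs, h, one_mul]
      have hzb : |MSamp.z s - S.gstar (MSamp.x s)| ≤ |S.tau| + 2 := by
        refine hs.trans ?_; nlinarith [le_abs_self S.tau, abs_nonneg S.tau]
      refine hdiv _ _ ((|S.tau| + 2) ^ 2) (by positivity) ?_
      rw [abs_pow, sq_abs]; nlinarith [abs_nonneg (MSamp.z s - S.gstar (MSamp.x s)), sq_abs (MSamp.z s - S.gstar (MSamp.x s))]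
  have hT1I : Integrable T1 μ := by
    refine integrable_of_ae_bound ((((hgM.comp hx).sub (S.gstarMeas.comp hx)).pow_const 2
      |>.div (heMeas.comp hx)).mul hbR).aestronglyMeasurable (C := 4 / eps0) ?_
    refine Filter.Eventually.of_forall fun s => ?_
    rcases hbR01 s with h | h
    · simp only [hT1, h, mul_zero, abs_zero]; positivity
    · simp only [hT1, h, mul_one]
      refine hdiv _ _ 4 (by norm_num) ?_
      rw [abs_pow, sq_abs]; nlinarith [hd2 (MSamp.x s), abs_nonneg (g (MSamp.x s) - S.gstar (MSamp.x s)), sq_abs (g (MSamp.x s) - S.gstar (MSamp.x s))]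
  have hT2I : Integrable T2 μ := by
    refine integrable_of_ae_bound (((hηM.mul ((S.gstarMeas.comp hx).sub (hgM.comp hx))
      |>.div (heMeas.comp hx)).mul hbR).aestronglyMeasurable) (C := |S.tau| * 2 / eps0) ?_
    filter_upwards [hτ] with s hs
    rcases hbR01 s with h | h
    · simp only [hT2, h, mul_zero, abs_zero]; positivity
    · simp only [hT2, h, mul_one]
      refine hdiv _ _ (|S.tau| * 2) (by positivity) ?_
      rw [abs_mul]
      have h1 : |η s| ≤ |S.tau| := hs.trans (le_abs_self _)
      have h2 : |S.gstar (MSamp.x s) - g (MSamp.x s)| ≤ 2 := by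
        rw [abs_sub_comm]; exact hd2 _
      exact mul_le_mul h1 h2 (abs_nonneg _) (abs_nonneg _)
  -- step A: pointwise decomposition
  have hpt : ∀ s, Fg s - Fgs s = T1 s + 2 * T2 s := by
    intro s
    rcases hbR01 s with h | h
    · simp [hFg, hFgs, hT1, hT2, h]
    · simp only [hFg, hFgs, hT1, hT2, h, one_mul, mul_one]
      field_simp
      ring
  have hA : S.wloss g e - S.wloss S.gstar e = (∫ s, T1 s ∂μ) + 2 * ∫ s, T2 s ∂μ := by
    have : S.wloss g e - S.wloss S.gstar e = ∫ s, (Fg s - Fgs s) ∂μ :=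
      (integral_sub hFgI hFgsI).symm
    rw [this, integral_congr_ae (Filter.Eventually.of_forall hpt),
      integral_add hT1I (hT2I.const_mul 2), integral_const_mul]
  -- the sub-σ-algebras
  have hp1 : Measurable (fun s : MSamp X => (MSamp.x s, MSamp.z s)) := hx.prodMk hz
  have hm1le : MeasurableSpace.comap (fun s : MSamp X => (MSamp.x s, MSamp.z s)) inferInstance
      ≤ (inferInstance : MeasurableSpace (MSamp X)) := hp1.comap_le
  have hm2le : MeasurableSpace.comap (MSamp.x (X := X)) inferInstance
      ≤ (inferInstance : MeasurableSpace (MSamp X)) := hx.comap_le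
  have hbRI : Integrable (MSamp.bR (X := X)) μ := by
    refine integrable_of_ae_bound hbR.aestronglyMeasurable (C := 1)
      (Filter.Eventually.of_forall fun s => ?_)
    rcases hbR01 s with h | h <;> simp [h]
  -- step C: ∫ T1 = ∫ e* d² / e
  have hC : (∫ s, T1 s ∂μ) =
      ∫ s, (g (MSamp.x s) - S.gstar (MSamp.x s)) ^ 2 / e (MSamp.x s) * S.estar (MSamp.x s) ∂μ := by
    refine pullout hm1le ?_ S.mar hbRI hT1I
    have : Measurable (fun p : X × ℝ => (g p.1 - S.gstar p.1) ^ 2 / e p.1) :=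
      ((hgM.comp measurable_fst).sub (S.gstarMeas.comp measurable_fst)).pow_const 2
        |>.div (heMeas.comp measurable_fst)
    exact (this.comp (comap_measurable _)).stronglyMeasurable
  -- step B: ∫ T2 = 0
  have hB : (∫ s, T2 s ∂μ) = 0 := by
    have hφ2 : StronglyMeasurable[MeasurableSpace.comap
          (fun s : MSamp X => (MSamp.x s, MSamp.z s)) inferInstance]
        (fun s : MSamp X => η s * (S.gstar (MSamp.x s) - g (MSamp.x s)) / e (MSamp.x s)) := by
      have : Measurable (fun p : X × ℝ => (p.2 - S.gstar p.1) * (S.gstar p.1 - g p.1) / e p.1) :=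
        ((measurable_snd.sub (S.gstarMeas.comp measurable_fst)).mul
          ((S.gstarMeas.comp measurable_fst).sub (hgM.comp measurable_fst))).div
          (heMeas.comp measurable_fst)
      exact (this.comp (comap_measurable _)).stronglyMeasurable
    have h5 : (∫ s, T2 s ∂μ) =
        ∫ s, η s * (S.gstar (MSamp.x s) - g (MSamp.x s)) / e (MSamp.x s) * S.estar (MSamp.x s) ∂μ :=
      pullout hm1le hφ2 S.mar hbRI hT2I
    -- now condition on x
    set χ : X → ℝ := fun y => (S.gstar y - g y) / e y * S.estar y with hχ
    have hrw : ∀ s : MSamp X, η s * (S.gstar (MSamp.x s) - g (MSamp.x s)) / e (MSamp.x s)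
        * S.estar (MSamp.x s) = χ (MSamp.x s) * η s := by
      intro s; simp only [hχ]; ring
    have hχM : Measurable χ := ((S.gstarMeas.sub hgM).div heMeas).mul S.estarMeas
    have hηI : Integrable η μ := by
      refine integrable_of_ae_bound hηM.aestronglyMeasurable (C := |S.tau|) ?_
      filter_upwards [hτ] with s hs; exact hs.trans (le_abs_self _)
    have hχηI : Integrable ((fun s => χ (MSamp.x s)) * η) μ := by
      refine integrable_of_ae_bound (((hχM.comp hx).mul hηM).aestronglyMeasurable)
        (C := (2 / eps0) * |S.tau|) ?_
      filter_upwards [hτ] with s hs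
      rw [Pi.mul_apply, abs_mul]
      have h1 : |χ (MSamp.x s)| ≤ 2 / eps0 := by
        rw [hχ, abs_mul]
        have he1 : |S.estar (MSamp.x s)| ≤ 1 := by
          rw [abs_le]; have := S.estarRange (MSamp.x s)
          exact ⟨by linarith [this.1], this.2⟩
        have h2 : |(S.gstar (MSamp.x s) - g (MSamp.x s)) / e (MSamp.x s)| ≤ 2 / eps0 := by
          refine hdiv _ _ 2 (by norm_num) ?_
          rw [abs_sub_comm]; exact hd2 _
        calc |(S.gstar (MSamp.x s) - g (MSamp.x s)) / e (MSamp.x s)| * |S.estar (MSamp.x s)|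
            ≤ (2 / eps0) * 1 := mul_le_mul h2 he1 (abs_nonneg _) (by positivity)
          _ = 2 / eps0 := mul_one _
      exact mul_le_mul h1 (hs.trans (le_abs_self _)) (abs_nonneg _) (by positivity)
    have h6 : (∫ s, χ (MSamp.x s) * η s ∂μ) = ∫ s, χ (MSamp.x s) * (0 : MSamp X → ℝ) s ∂μ := by
      refine pullout hm2le ?_ S.eta_mean hηI hχηI
      exact ((hχM.comp (comap_measurable _))).stronglyMeasurable
    rw [h5, integral_congr_ae (Filter.Eventually.of_forall hrw), h6]
    simp
  -- pointwise inequality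
  have hptineq : ∀ s : MSamp X, (1 / 2) * (g (MSamp.x s) - S.gstar (MSamp.x s)) ^ 2 ≤
      (8 / eps0 ^ 2) * (e (MSamp.x s) - S.estar (MSamp.x s)) ^ 2 +
        (g (MSamp.x s) - S.gstar (MSamp.x s)) ^ 2 / e (MSamp.x s) * S.estar (MSamp.x s) := by
    intro s
    set y := MSamp.x s
    set dd := g y - S.gstar y with hdd
    set c := e y - S.estar y with hc
    have h1 : eps0 ≤ e y := heLB y
    have h2 : e y ≤ 1 := (heRange y).2
    have h3 : |dd| ≤ 2 := hd2 y
    have hepos := hePos y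
    exact ptineq eps0 dd (e y) (S.estar y) heps0 h1 h2 (hestarLB y) h3
  -- integrability for the final comparison
  have hI1 : Integrable (fun s : MSamp X => (g (MSamp.x s) - S.gstar (MSamp.x s)) ^ 2) μ := by
    refine integrable_of_ae_bound
      (((hgM.comp hx).sub (S.gstarMeas.comp hx)).pow_const 2).aestronglyMeasurable
      (C := 4) (Filter.Eventually.of_forall fun s => ?_)
    rw [abs_of_nonneg (sq_nonneg _)]
    nlinarith [hd2 (MSamp.x s), abs_nonneg (g (MSamp.x s) - S.gstar (MSamp.x s)),
      sq_abs (g (MSamp.x s) - S.gstar (MSamp.x s))]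
  have hI2 : Integrable (fun s : MSamp X => (e (MSamp.x s) - S.estar (MSamp.x s)) ^ 2) μ := by
    refine integrable_of_ae_bound
      (((heMeas.comp hx).sub (S.estarMeas.comp hx)).pow_const 2).aestronglyMeasurable
      (C := 4) (Filter.Eventually.of_forall fun s => ?_)
    rw [abs_of_nonneg (sq_nonneg _)]
    have ha := heRange (MSamp.x s); have hb := S.estarRange (MSamp.x s)
    nlinarith [ha.1, ha.2, hb.1, hb.2]
  have hI3 : Integrable (fun s : MSamp X =>
      (g (MSamp.x s) - S.gstar (MSamp.x s)) ^ 2 / e (MSamp.x s) * S.estar (MSamp.x s)) μ := by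
    refine integrable_of_ae_bound
      (((((hgM.comp hx).sub (S.gstarMeas.comp hx)).pow_const 2).div
        (heMeas.comp hx)).mul (S.estarMeas.comp hx)).aestronglyMeasurable
      (C := 4 / eps0 * 1) (Filter.Eventually.of_forall fun s => ?_)
    rw [abs_mul]
    have h1 : |(g (MSamp.x s) - S.gstar (MSamp.x s)) ^ 2 / e (MSamp.x s)| ≤ 4 / eps0 := by
      refine hdiv _ _ 4 (by norm_num) ?_
      rw [abs_pow, sq_abs]
      nlinarith [hd2 (MSamp.x s), abs_nonneg (g (MSamp.x s) - S.gstar (MSamp.x s)),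
        sq_abs (g (MSamp.x s) - S.gstar (MSamp.x s))]
    have h2 : |S.estar (MSamp.x s)| ≤ 1 := by
      have := S.estarRange (MSamp.x s)
      rw [abs_le]; exact ⟨by linarith [this.1], this.2⟩
    exact mul_le_mul h1 h2 (abs_nonneg _) (by positivity)
  have hmono : ∫ s, (1 / 2) * (g (MSamp.x s) - S.gstar (MSamp.x s)) ^ 2 ∂μ ≤
      ∫ s, ((8 / eps0 ^ 2) * (e (MSamp.x s) - S.estar (MSamp.x s)) ^ 2 +
        (g (MSamp.x s) - S.gstar (MSamp.x s)) ^ 2 / e (MSamp.x s) * S.estar (MSamp.x s)) ∂μ :=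
    integral_mono (hI1.const_mul _) ((hI2.const_mul _).add hI3) hptineq
  have hL2g : S.L2x g S.gstar ^ 2 =
      ∫ s, (g (MSamp.x s) - S.gstar (MSamp.x s)) ^ 2 ∂μ :=
    Real.sq_sqrt (integral_nonneg fun s => sq_nonneg _)
  have hL2e : S.L2x e S.estar ^ 2 =
      ∫ s, (e (MSamp.x s) - S.estar (MSamp.x s)) ^ 2 ∂μ :=
    Real.sq_sqrt (integral_nonneg fun s => sq_nonneg _)
  calc (1 / 2) * S.L2x g S.gstar ^ 2
      = ∫ s, (1 / 2) * (g (MSamp.x s) - S.gstar (MSamp.x s)) ^ 2 ∂μ := by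
        rw [hL2g]; exact (integral_const_mul _ _).symm
    _ ≤ ∫ s, ((8 / eps0 ^ 2) * (e (MSamp.x s) - S.estar (MSamp.x s)) ^ 2 +
        (g (MSamp.x s) - S.gstar (MSamp.x s)) ^ 2 / e (MSamp.x s) * S.estar (MSamp.x s)) ∂μ :=
        hmono
    _ = (8 / eps0 ^ 2) * S.L2x e S.estar ^ 2 + (S.wloss g e - S.wloss S.gstar e) := by
        rw [integral_add (hI2.const_mul _) hI3, integral_const_mul, hL2e, hA, hB, hC]; ring
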